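/- Suppose r : List (S × A) → ℝ satisfies the Strong PI condition and is bounded. Let τ₁, τ₂ be lists of equal length, and let μ, ν : PMF (List (S × A)) be two continuation distributions whose pushforwards under List.length coincide (μ and ν assign the same probability to each continuation length). Then E_{τ'∼μ}[r(τ₁ ++ τ')] − E_{τ'∼ν}[r(τ₁ ++ τ')] = E_{τ'∼μ}[r(τ₂ ++ τ')] − E_{τ'∼ν}[r(τ₂ ++ τ')], where E_{τ'∼μ}[g(τ')] = ∑' l, (μ l).toReal * g(l). In particular, E_{μ}[r(τ₁ ++ ·)] > E_{ν}[r(τ₁ ++ ·)] if and only if E_{μ}[r(τ₂ ++ ·)] > E_{ν}[r(τ₂ ++ ·)]. (This is the order-invariance of Q-values over actions of the paper's Fact 3.2, established under the Strong PI condition: the continuation distributions induced by two actions at the same state do not depend on the history, and the interval-length distribution is action-independent, so their length marginals agree.) -/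

import Mathlib

/-- The Strong Past-Invariant condition on a reward function over trajectory
segments. -/
def StrongPI {S A : Type*} (r : List (S × A) → ℝ) : Prop :=
  ∀ τ₁ τ₂ τ₁' τ₂' : List (S × A), τ₁.length = τ₂.length →
    τ₁'.length = τ₂'.length →
    r (τ₁ ++ τ₁') - r (τ₁ ++ τ₂') = r (τ₂ ++ τ₁') - r (τ₂ ++ τ₂')

/-- Order-invariance of expected returns over histories (Fact 3.2 under the
Strong PI condition): if the continuation distributions `μ, ν` have the same
length marginals, then the difference of expected rewards between `μ` and `ν`
does not depend on the (equal-length) history; in particular the comparison of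
expected rewards under `μ` and `ν` is invariant of the history. -/
theorem strongPI_expected_order_invariance {S A : Type*}
    (r : List (S × A) → ℝ) (hr : StrongPI r) (hb : ∃ M, ∀ l, |r l| ≤ M)
    (τ₁ τ₂ : List (S × A)) (hlen : τ₁.length = τ₂.length)
    (μ ν : PMF (List (S × A)))
    (hμν : μ.map List.length = ν.map List.length) :
    ((∑' l, (μ l).toReal * r (τ₁ ++ l)) - (∑' l, (ν l).toReal * r (τ₁ ++ l)) =
      (∑' l, (μ l).toReal * r (τ₂ ++ l)) - (∑' l, (ν l).toReal * r (τ₂ ++ l))) ∧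
    ((∑' l, (μ l).toReal * r (τ₁ ++ l)) > (∑' l, (ν l).toReal * r (τ₁ ++ l)) ↔
      (∑' l, (μ l).toReal * r (τ₂ ++ l)) > (∑' l, (ν l).toReal * r (τ₂ ++ l))) := by
  classical
  obtain ⟨M, hM⟩ := hb
  have hM0 : 0 ≤ M := le_trans (abs_nonneg _) (hM [])
  set d : List (S × A) → ℝ := fun l => r (τ₁ ++ l) - r (τ₂ ++ l) with hd
  have hd_len : ∀ l l' : List (S × A), l.length = l'.length → d l = d l' := by
    intro l l' h
    have := hr τ₁ τ₂ l l' hlen h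
    simp only [hd]; linarith
  set f : ℕ → ℝ := fun n =>
    if h : ∃ l : List (S × A), l.length = n then d h.choose else 0 with hf
  have hdf : ∀ l : List (S × A), d l = f l.length := by
    intro l
    have hex : ∃ l' : List (S × A), l'.length = l.length := ⟨l, rfl⟩
    simp only [hf, dif_pos hex]
    exact hd_len l hex.choose hex.choose_spec.symm
  have hfb : ∀ n, |f n| ≤ 2 * M := by
    intro n
    simp only [hf]
    split
    · rename_i h
      calc |d h.choose| ≤ |r (τ₁ ++ h.choose)| + |r (τ₂ ++ h.choose)| := abs_sub _ _
        _ ≤ 2 * M := by have := hM (τ₁ ++ h.choose); have := hM (τ₂ ++ h.choose); linarith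
    · simpa using by linarith
  -- summability of expectations of bounded functions
  have hsum : ∀ (p : PMF (List (S × A))) (g : List (S × A) → ℝ) (C : ℝ),
      (∀ l, |g l| ≤ C) → Summable (fun l => (p l).toReal * g l) := by
    intro p g C hg
    have h1 : Summable fun l => (p l).toReal :=
      ENNReal.summable_toReal (by rw [p.tsum_coe]; exact ENNReal.one_ne_top)
    refine Summable.of_norm_bounded (g := fun l => (p l).toReal * C) (h1.mul_right C) ?_
    intro l
    rw [Real.norm_eq_abs, abs_mul, abs_of_nonneg ENNReal.toReal_nonneg]
    exact mul_le_mul_of_nonneg_left (hg l) ENNReal.toReal_nonneg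
  -- key: expectation of f ∘ length depends only on the length marginal
  have key : ∀ p : PMF (List (S × A)),
      ∑' l, (p l).toReal * f l.length
        = ∑' n, ((p.map List.length) n).toReal * f n := by
    intro p
    have hG : ∑' (q : ℕ × List (S × A)),
        (if q.1 = q.2.length then p q.2 else (0 : ENNReal)) = 1 := by
      rw [ENNReal.tsum_prod', ENNReal.tsum_comm]
      simp only [tsum_ite_eq]
      exact p.tsum_coe
    have hGt : Summable fun q : ℕ × List (S × A) =>
        (if q.1 = q.2.length then p q.2 else (0 : ENNReal)).toReal :=
      ENNReal.summable_toReal (by rw [hG]; exact ENNReal.one_ne_top)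
    have hh : Summable (Function.uncurry fun (n : ℕ) (l : List (S × A)) =>
        (if n = l.length then p l else (0 : ENNReal)).toReal * f n) := by
      refine Summable.of_norm_bounded
        (g := fun q : ℕ × List (S × A) => (if q.1 = q.2.length then p q.2 else (0 : ENNReal)).toReal * (2 * M))
        (hGt.mul_right _) ?_
      intro q
      rw [Real.norm_eq_abs, Function.uncurry, abs_mul,
        abs_of_nonneg ENNReal.toReal_nonneg]
      exact mul_le_mul_of_nonneg_left (hfb q.1) ENNReal.toReal_nonneg
    calc ∑' l, (p l).toReal * f l.length
        = ∑' (l : List (S × A)) (n : ℕ),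
            (if n = l.length then p l else (0 : ENNReal)).toReal * f n := by
          refine tsum_congr fun l => ?_
          rw [tsum_eq_single l.length (by intro n hn; simp [hn])]
          simp
      _ = ∑' (n : ℕ) (l : List (S × A)),
            (if n = l.length then p l else (0 : ENNReal)).toReal * f n := Summable.tsum_comm hh
      _ = ∑' n, ((p.map List.length) n).toReal * f n := by
          refine tsum_congr fun n => ?_
          rw [PMF.map_apply, ENNReal.tsum_toReal_eq (fun l => ?_), tsum_mul_right]
          · congr!
          · split <;> simp [PMF.apply_ne_top]
  -- summability of the four expectations
  have s1 := hsum μ (fun l => r (τ₁ ++ l)) M (fun l => hM _)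
  have s2 := hsum μ (fun l => r (τ₂ ++ l)) M (fun l => hM _)
  have s3 := hsum ν (fun l => r (τ₁ ++ l)) M (fun l => hM _)
  have s4 := hsum ν (fun l => r (τ₂ ++ l)) M (fun l => hM _)
  have hμd : (∑' l, (μ l).toReal * r (τ₁ ++ l)) - (∑' l, (μ l).toReal * r (τ₂ ++ l))
      = ∑' l, (μ l).toReal * f l.length := by
    rw [← Summable.tsum_sub s1 s2]
    refine tsum_congr fun l => ?_
    rw [← hdf]; simp only [hd]; ring
  have hνd : (∑' l, (ν l).toReal * r (τ₁ ++ l)) - (∑' l, (ν l).toReal * r (τ₂ ++ l))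
      = ∑' l, (ν l).toReal * f l.length := by
    rw [← Summable.tsum_sub s3 s4]
    refine tsum_congr fun l => ?_
    rw [← hdf]; simp only [hd]; ring
  have hmain : (∑' l, (μ l).toReal * r (τ₁ ++ l)) - (∑' l, (μ l).toReal * r (τ₂ ++ l))
      = (∑' l, (ν l).toReal * r (τ₁ ++ l)) - (∑' l, (ν l).toReal * r (τ₂ ++ l)) := by
    rw [hμd, hνd, key μ, key ν, hμν]
  constructor
  · linarith
  · constructor <;> intro h <;> linarith
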